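/- arXiv:2005.03634 — 2 statements merged into one kernel-verified Lean document; each statement's English description precedes it below -/
import Mathlib

section
/- Let p be a prime, let G be a finite p-group whose nilpotency class is at most 2, and let w be a word in two variables (an element of the free group on two generators). Then for every w-value g ∈ G_w, the fibre size satisfies N_{w,G}(g) ≥ |G|. -/
open scoped commutatorElement

section Core
variable {G : Type*} [Group G] (hc : ∀ x y z : G, Commute ⁅x, y⁆ z)

lemma mul_eq_comm_mul (a b : G) : a * b = ⁅a, b⁆ * (b * a) := by
  simp [commutatorElement_def, mul_assoc]

lemma conj_eq_comm_mul (x y : G) : y * x * y⁻¹ = ⁅y, x⁆ * x := by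
  simp [commutatorElement_def, mul_assoc]

include hc

lemma comm_zpow_left' (n : ℤ) (x y : G) : ⁅y ^ n, x⁆ = ⁅y, x⁆ ^ n := by
  have h1 : x * y ^ (-n) * x⁻¹ = ⁅x, y⁆ ^ (-n) * y ^ (-n) := by
    rw [← conj_zpow, conj_eq_comm_mul, (hc x y y).mul_zpow]
  calc ⁅y ^ n, x⁆ = y ^ n * (x * y ^ (-n) * x⁻¹) := by
        simp [commutatorElement_def, zpow_neg, mul_assoc]
    _ = y ^ n * (⁅x, y⁆ ^ (-n) * y ^ (-n)) := by rw [h1]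
    _ = ⁅x, y⁆ ^ (-n) * (y ^ n * y ^ (-n)) := by
        rw [← mul_assoc, ← ((hc x y _).zpow_left (-n)).eq, mul_assoc]
    _ = ⁅y, x⁆ ^ n := by
        rw [← zpow_add, add_neg_cancel, zpow_zero, mul_one, ← commutatorElement_inv,
          zpow_neg, ← inv_zpow, inv_inv]

lemma comm_zpow_right' (n : ℤ) (x y : G) : ⁅x, y ^ n⁆ = ⁅x, y⁆ ^ n := by
  rw [← inv_inj, commutatorElement_inv, comm_zpow_left' hc, ← inv_zpow, commutatorElement_inv]

lemma zpow_mul_zpow (m n : ℤ) (x y : G) :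
    y ^ n * x ^ m = x ^ m * y ^ n * ⁅y, x⁆ ^ (n * m) := by
  have h : ⁅y ^ n, x ^ m⁆ = ⁅y, x⁆ ^ (n * m) := by
    rw [comm_zpow_left' hc, comm_zpow_right' hc, ← zpow_mul, mul_comm m n]
  calc y ^ n * x ^ m = ⁅y ^ n, x ^ m⁆ * (x ^ m * y ^ n) := mul_eq_comm_mul _ _
    _ = ⁅y, x⁆ ^ (n * m) * (x ^ m * y ^ n) := by rw [h]
    _ = x ^ m * y ^ n * ⁅y, x⁆ ^ (n * m) := ((hc y x _).zpow_left (n*m)).eq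

lemma comm_mul_right'' (x u v : G) : ⁅x, u * v⁆ = ⁅x, u⁆ * ⁅x, v⁆ := by
  have h : ⁅x, u * v⁆ = ⁅x, u⁆ * (u * ⁅x, v⁆ * u⁻¹) := by
    simp only [commutatorElement_def, mul_inv_rev, mul_assoc, inv_mul_cancel_left,
      inv_mul_cancel, mul_one]
  rw [h, ← (hc x v u).eq, mul_assoc, mul_inv_cancel, mul_one]

omit hc in
lemma comm_central_left (x z y : G) (hz : ∀ g : G, Commute z g) : ⁅x * z, y⁆ = ⁅x, y⁆ := by
  have h1 : ⁅z, y⁆ = 1 := commutatorElement_eq_one_iff_commute.mpr (hz y)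
  have h2 : ⁅x * z, y⁆ = x * ⁅z, y⁆ * x⁻¹ * ⁅x, y⁆ := by
    simp only [commutatorElement_def, mul_inv_rev, mul_assoc, inv_mul_cancel_left,
      inv_mul_cancel, mul_one]
  rw [h2, h1, mul_one, mul_inv_cancel, one_mul]

end Core

/-- The discrete Heisenberg group: a model of the free class-two group on two generators. -/
@[ext] structure Hei where
  a : ℤ
  b : ℤ
  e : ℤ

namespace Hei

instance : Mul Hei := ⟨fun u v => ⟨u.a + v.a, u.b + v.b, u.e + v.e - u.b * v.a⟩⟩
instance : One Hei := ⟨⟨0, 0, 0⟩⟩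
instance : Inv Hei := ⟨fun u => ⟨-u.a, -u.b, -u.e - u.a * u.b⟩⟩

@[simp] lemma mul_a (u v : Hei) : (u * v).a = u.a + v.a := rfl
@[simp] lemma mul_b (u v : Hei) : (u * v).b = u.b + v.b := rfl
@[simp] lemma mul_e (u v : Hei) : (u * v).e = u.e + v.e - u.b * v.a := rfl
@[simp] lemma one_a : (1 : Hei).a = 0 := rfl
@[simp] lemma one_b : (1 : Hei).b = 0 := rfl
@[simp] lemma one_e : (1 : Hei).e = 0 := rfl
@[simp] lemma inv_a (u : Hei) : u⁻¹.a = -u.a := rfl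
@[simp] lemma inv_b (u : Hei) : u⁻¹.b = -u.b := rfl
@[simp] lemma inv_e (u : Hei) : u⁻¹.e = -u.e - u.a * u.b := rfl

instance : Group Hei where
  mul_assoc u v w := by ext <;> simp <;> ring
  one_mul u := by ext <;> simp
  mul_one u := by ext <;> simp
  inv_mul_cancel u := by ext <;> simp <;> ring

lemma zpow_a (u : Hei) (n : ℤ) : (u ^ n).a = n * u.a := by
  induction n using Int.induction_on with
  | zero => simp
  | succ k ih => rw [zpow_add_one, mul_a, ih]; ring
  | pred k ih => rw [zpow_sub_one, mul_a, inv_a, ih]; ring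

lemma zpow_b (u : Hei) (n : ℤ) : (u ^ n).b = n * u.b := by
  induction n using Int.induction_on with
  | zero => simp
  | succ k ih => rw [zpow_add_one, mul_b, ih]; ring
  | pred k ih => rw [zpow_sub_one, mul_b, inv_b, ih]; ring

lemma zpow_eq (u : Hei) (n : ℤ) : ∃ m : ℤ, u ^ n = ⟨n * u.a, n * u.b, m⟩ :=
  ⟨(u ^ n).e, by ext <;> simp [zpow_a, zpow_b]⟩

lemma comm_eq (u v : Hei) : ⁅u, v⁆ = ⟨0, 0, u.a * v.b - u.b * v.a⟩ := by
  rw [commutatorElement_def]; ext <;> simp <;> ring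

end Hei

section Theta
variable {G : Type*} [Group G] (hc : ∀ x y z : G, Commute ⁅x, y⁆ z)

/-- Evaluation of a Heisenberg element on a pair of group elements. -/
def theta (x y : G) (u : Hei) : G := x ^ u.a * (y ^ u.b * ⁅x, y⁆ ^ u.e)

include hc

lemma cmove (n : ℤ) (x y g t : G) : ⁅x, y⁆ ^ n * (g * t) = g * (⁅x, y⁆ ^ n * t) := by
  rw [← mul_assoc, ((hc x y g).zpow_left n).eq, mul_assoc]

lemma zpow_mul_zpow' (m n : ℤ) (x y t : G) :
    y ^ n * (x ^ m * t) = x ^ m * (y ^ n * (⁅y, x⁆ ^ (n * m) * t)) := by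
  rw [← mul_assoc, zpow_mul_zpow hc, mul_assoc, mul_assoc]

omit hc in
lemma comm_swap_zpow (n : ℤ) (x y : G) : ⁅y, x⁆ ^ n = ⁅x, y⁆ ^ (-n) := by
  rw [← commutatorElement_inv, inv_zpow, ← zpow_neg]

lemma theta_mul (x y : G) (u v : Hei) :
    theta x y (u * v) = theta x y u * theta x y v := by
  rcases u with ⟨a, b, e⟩
  rcases v with ⟨a', b', e'⟩
  show x ^ (a + a') * (y ^ (b + b') * ⁅x, y⁆ ^ (e + e' - b * a')) =
    x ^ a * (y ^ b * ⁅x, y⁆ ^ e) * (x ^ a' * (y ^ b' * ⁅x, y⁆ ^ e'))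
  simp only [mul_assoc]
  rw [cmove hc e x y (x ^ a'), cmove hc e x y (y ^ b'), ← zpow_add,
    zpow_mul_zpow' hc a' b x y, comm_swap_zpow (b * a') x y,
    cmove hc (-(b * a')) x y (y ^ b'), ← zpow_add,
    ← mul_assoc (x ^ a) (x ^ a'), ← zpow_add,
    ← mul_assoc (y ^ b) (y ^ b'), ← zpow_add]
  congr 3
  ring

/-- `theta` as a monoid hom from the Heisenberg group. -/
def thetaM (x y : G) : Hei →* G := MonoidHom.mk' (theta x y) (theta_mul hc x y)

lemma thetaM_x (x y : G) (a : ℤ) : thetaM hc x y ⟨a, 0, 0⟩ = x ^ a := by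
  show x ^ a * (y ^ (0:ℤ) * ⁅x, y⁆ ^ (0:ℤ)) = x ^ a
  simp

lemma thetaM_y (x y : G) (b : ℤ) : thetaM hc x y ⟨0, b, 0⟩ = y ^ b := by
  show x ^ (0:ℤ) * (y ^ b * ⁅x, y⁆ ^ (0:ℤ)) = y ^ b
  simp

lemma thetaM_c (x y : G) (e : ℤ) : thetaM hc x y ⟨0, 0, e⟩ = ⁅x, y⁆ ^ e := by
  show x ^ (0:ℤ) * (y ^ (0:ℤ) * ⁅x, y⁆ ^ e) = ⁅x, y⁆ ^ e
  simp

lemma thetaM_apply (x y : G) (u : Hei) :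
    thetaM hc x y u = x ^ u.a * (y ^ u.b * ⁅x, y⁆ ^ u.e) := rfl

end Theta

section Counting
variable {G : Type*} [Group G]

/-- The fibre-bound property for the word map `(x, y) ↦ x^a * y^b * ⁅x,y⁆^e`. -/
def FibreBig (G : Type*) [Group G] (a b : ℤ) : Prop :=
  ∀ (e : ℤ) (g : G), (∃ p : G × G, p.1 ^ a * (p.2 ^ b * ⁅p.1, p.2⁆ ^ e) = g) →
    Nat.card G ≤ Nat.card {p : G × G // p.1 ^ a * (p.2 ^ b * ⁅p.1, p.2⁆ ^ e) = g}

variable (hc : ∀ x y z : G, Commute ⁅x, y⁆ z) [Finite G]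

include hc

lemma fibreBig_base (a : ℤ) : FibreBig G a 0 := by
  intro e g hg
  obtain ⟨⟨x0, y0⟩, hxy⟩ := hg
  simp only [zpow_zero, one_mul] at hxy
  -- the homomorphism `t ↦ ⁅x0, t⁆ ^ e`
  let ψ : G →* G := MonoidHom.mk' (fun t => ⁅x0, t⁆ ^ e)
    (fun u v => by
      show ⁅x0, u * v⁆ ^ e = ⁅x0, u⁆ ^ e * ⁅x0, v⁆ ^ e
      rw [comm_mul_right'' hc, (hc x0 u ⁅x0, v⁆).mul_zpow])
  have hψ : ∀ t : G, ψ t = ⁅x0, t⁆ ^ e := fun _ => rfl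
  have hcent : ∀ z : G, z ∈ ψ.range → ∀ g' : G, Commute z g' := by
    rintro z ⟨t, rfl⟩ g'
    exact (hc x0 t g').zpow_left e
  -- selection of preimages
  have hsel : ∀ z : ψ.range, ∃ t : G, ψ t = ⁅x0, y0⁆ ^ e * (z : G) ^ (-a) := by
    intro z
    have hmem : ⁅x0, y0⁆ ^ e * (z : G) ^ (-a) ∈ ψ.range :=
      mul_mem ⟨y0, rfl⟩ (zpow_mem z.2 (-a))
    exact hmem
  choose sel hsel' using hsel
  set Fib := {p : G × G // p.1 ^ a * (p.2 ^ (0:ℤ) * ⁅p.1, p.2⁆ ^ e) = g} with hFib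
  have hΦprop : ∀ zu : ψ.range × ψ.ker,
      ((x0 * (zu.1 : G), sel zu.1 * (zu.2 : G)) : G × G).1 ^ a *
      (((x0 * (zu.1 : G), sel zu.1 * (zu.2 : G)) : G × G).2 ^ (0:ℤ) *
        ⁅((x0 * (zu.1 : G), sel zu.1 * (zu.2 : G)) : G × G).1,
         ((x0 * (zu.1 : G), sel zu.1 * (zu.2 : G)) : G × G).2⁆ ^ e) = g := by
    rintro ⟨z, u⟩
    have hz : ∀ g' : G, Commute (z : G) g' := hcent z z.2
    have hu : ψ (u : G) = 1 := u.2
    simp only [zpow_zero, one_mul]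
    rw [comm_central_left x0 (z : G) _ hz]
    have h1 : ⁅x0, sel z * (u : G)⁆ ^ e = ⁅x0, y0⁆ ^ e * (z : G) ^ (-a) := by
      rw [← hψ, map_mul, hsel', hu, mul_one]
    rw [h1, (hz x0).symm.mul_zpow]
    calc x0 ^ a * (z : G) ^ a * (⁅x0, y0⁆ ^ e * (z : G) ^ (-a))
        = x0 ^ a * ((z : G) ^ a * ⁅x0, y0⁆ ^ e * (z : G) ^ (-a)) := by
          simp only [mul_assoc]
      _ = x0 ^ a * (⁅x0, y0⁆ ^ e * ((z : G) ^ a * (z : G) ^ (-a))) := by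
          rw [((hz (⁅x0, y0⁆ ^ e)).zpow_left a).eq]
          simp only [mul_assoc]
      _ = x0 ^ a * ⁅x0, y0⁆ ^ e := by
          rw [← zpow_add, add_neg_cancel, zpow_zero, mul_one]
      _ = g := hxy
  let Φ : ψ.range × ψ.ker → Fib := fun zu =>
    ⟨(x0 * (zu.1 : G), sel zu.1 * (zu.2 : G)), hΦprop zu⟩
  have hΦinj : Function.Injective Φ := by
    rintro ⟨z, u⟩ ⟨z', u'⟩ h
    have h2 := congrArg (fun q : Fib => (q : G × G)) h
    simp only [Φ, Prod.mk.injEq] at h2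
    obtain ⟨hz2, hu2⟩ := h2
    have hz3 : z = z' := Subtype.ext (mul_left_cancel hz2)
    subst hz3
    have hu3 : u = u' := Subtype.ext (mul_left_cancel hu2)
    rw [hu3]
  have hcard : Nat.card (ψ.range × ψ.ker) = Nat.card G := by
    rw [Nat.card_prod]
    have h3 := Subgroup.card_eq_card_quotient_mul_card_subgroup ψ.ker
    have h4 : Nat.card (G ⧸ ψ.ker) = Nat.card ψ.range :=
      Nat.card_congr (QuotientGroup.quotientKerEquivRange ψ).toEquiv
    rw [h4] at h3
    omega
  calc Nat.card G = Nat.card (ψ.range × ψ.ker) := hcard.symm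
    _ ≤ Nat.card Fib := Nat.card_le_card_of_injective Φ hΦinj

end Counting

section Reduction
variable {G : Type*} [Group G] (hc : ∀ x y z : G, Commute ⁅x, y⁆ z) [Finite G]

include hc

lemma fibreBig_swap (a b : ℤ) (h : FibreBig G b a) : FibreBig G a b := by
  intro e g hg
  set e' := -(b * a) - e with he'
  have hval : ∀ x y : G, y ^ b * (x ^ a * ⁅y, x⁆ ^ e') = x ^ a * (y ^ b * ⁅x, y⁆ ^ e) := by
    intro x y
    calc y ^ b * (x ^ a * ⁅y, x⁆ ^ e')
        = thetaM hc x y ⟨0, b, 0⟩ * (thetaM hc x y ⟨a, 0, 0⟩ * thetaM hc x y ⟨0, 0, -e'⟩) := by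
          rw [thetaM_x, thetaM_y, thetaM_c, comm_swap_zpow e' x y]
      _ = thetaM hc x y (⟨0, b, 0⟩ * (⟨a, 0, 0⟩ * ⟨0, 0, -e'⟩)) := by rw [map_mul, map_mul]
      _ = x ^ a * (y ^ b * ⁅x, y⁆ ^ e) := by
          rw [show (⟨0, b, 0⟩ * (⟨a, 0, 0⟩ * ⟨0, 0, -e'⟩) : Hei) = ⟨a, b, e⟩ by
            ext <;> simp [he'] <;> ring, thetaM_apply]
  obtain ⟨⟨x, y⟩, hp⟩ := hg
  have hwit : ∃ p : G × G, p.1 ^ b * (p.2 ^ a * ⁅p.1, p.2⁆ ^ e') = g :=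
    ⟨(y, x), by rw [hval x y]; exact hp⟩
  have hiff : ∀ p : G × G, p.1 ^ b * (p.2 ^ a * ⁅p.1, p.2⁆ ^ e') = g ↔
      ((Equiv.prodComm G G) p).1 ^ a *
        (((Equiv.prodComm G G) p).2 ^ b * ⁅((Equiv.prodComm G G) p).1,
          ((Equiv.prodComm G G) p).2⁆ ^ e) = g := by
    intro p
    rw [Equiv.prodComm_apply, Prod.fst_swap, Prod.snd_swap, hval p.2 p.1]
  calc Nat.card G ≤ Nat.card {p : G × G // p.1 ^ b * (p.2 ^ a * ⁅p.1, p.2⁆ ^ e') = g} :=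
        h e' g hwit
    _ = Nat.card {p : G × G // p.1 ^ a * (p.2 ^ b * ⁅p.1, p.2⁆ ^ e) = g} :=
        Nat.card_congr (Equiv.subtypeEquiv (Equiv.prodComm G G) hiff)

lemma fibreBig_shear (a b k : ℤ) (h : FibreBig G (a + b * k) b) : FibreBig G a b := by
  intro e g hg
  obtain ⟨m, hm⟩ := Hei.zpow_eq ⟨k, 1, -k⟩ b
  have hval : ∀ x y : G, x ^ a * ((y * x ^ k) ^ b * ⁅x, y * x ^ k⁆ ^ e) =
      x ^ (a + b * k) * (y ^ b * ⁅x, y⁆ ^ (m + e)) := by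
    intro x y
    have hyx : y * x ^ k = thetaM hc x y ⟨k, 1, -k⟩ := by
      rw [show (⟨k, 1, -k⟩ : Hei) = ⟨0, 1, 0⟩ * ⟨k, 0, 0⟩ by ext <;> simp, map_mul,
        thetaM_x, thetaM_y, zpow_one]
    have hcomm : ⁅x, y * x ^ k⁆ = ⁅x, y⁆ := by
      rw [comm_mul_right'' hc, comm_zpow_right' hc, commutatorElement_self, one_zpow, mul_one]
    calc x ^ a * ((y * x ^ k) ^ b * ⁅x, y * x ^ k⁆ ^ e)
        = thetaM hc x y ⟨a, 0, 0⟩ * (thetaM hc x y (⟨k, 1, -k⟩ ^ b) * thetaM hc x y ⟨0, 0, e⟩) := by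
          rw [hcomm, thetaM_x, thetaM_c, hyx, ← map_zpow]
      _ = thetaM hc x y (⟨a, 0, 0⟩ * (⟨k, 1, -k⟩ ^ b * ⟨0, 0, e⟩)) := by rw [map_mul, map_mul]
      _ = x ^ (a + b * k) * (y ^ b * ⁅x, y⁆ ^ (m + e)) := by
          rw [hm, show (⟨a, 0, 0⟩ * (⟨b * k, b * 1, m⟩ * ⟨0, 0, e⟩) : Hei) = ⟨a + b * k, b, m + e⟩ by
            ext <;> simp <;> ring, thetaM_apply]
  let τ : G × G ≃ G × G :=
    { toFun := fun p => (p.1, p.2 * p.1 ^ k)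
      invFun := fun p => (p.1, p.2 * p.1 ^ (-k))
      left_inv := fun p => by simp [mul_assoc, ← zpow_add]
      right_inv := fun p => by simp [mul_assoc, ← zpow_add] }
  have hiff : ∀ p : G × G, p.1 ^ (a + b * k) * (p.2 ^ b * ⁅p.1, p.2⁆ ^ (m + e)) = g ↔
      (τ p).1 ^ a * ((τ p).2 ^ b * ⁅(τ p).1, (τ p).2⁆ ^ e) = g := by
    intro p
    show _ ↔ p.1 ^ a * ((p.2 * p.1 ^ k) ^ b * ⁅p.1, p.2 * p.1 ^ k⁆ ^ e) = g
    rw [hval p.1 p.2]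
  obtain ⟨⟨x, y⟩, hp⟩ := hg
  have hwit : ∃ p : G × G, p.1 ^ (a + b * k) * (p.2 ^ b * ⁅p.1, p.2⁆ ^ (m + e)) = g := by
    refine ⟨(x, y * x ^ (-k)), ?_⟩
    rw [hiff]
    show x ^ a * ((y * x ^ (-k) * x ^ k) ^ b * ⁅x, y * x ^ (-k) * x ^ k⁆ ^ e) = g
    have h5 : y * x ^ (-k) * x ^ k = y := by simp [mul_assoc, ← zpow_add]
    rw [h5]
    exact hp
  calc Nat.card G
      ≤ Nat.card {p : G × G // p.1 ^ (a + b * k) * (p.2 ^ b * ⁅p.1, p.2⁆ ^ (m + e)) = g} :=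
        h (m + e) g hwit
    _ = Nat.card {p : G × G // p.1 ^ a * (p.2 ^ b * ⁅p.1, p.2⁆ ^ e) = g} :=
        Nat.card_congr (Equiv.subtypeEquiv τ hiff)

omit hc in
lemma natAbs_emod_lt' (a b : ℤ) (hb : b ≠ 0) : (a % b).natAbs < b.natAbs := by
  have h0 : 0 ≤ a % b := Int.emod_nonneg a hb
  rcases hb.lt_or_gt with h | h
  · have h2 := Int.emod_lt_of_pos a (neg_pos.mpr h)
    rw [Int.emod_neg] at h2
    omega
  · have h2 := Int.emod_lt_of_pos a h
    omega

lemma fibreBig_all : ∀ (n : ℕ) (a b : ℤ), b.natAbs = n → FibreBig G a b := by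
  intro n
  induction n using Nat.strong_induction_on with
  | _ n ih =>
    intro a b hb
    rcases eq_or_ne b 0 with rfl | hb0
    · exact fibreBig_base hc a
    · have h1 : FibreBig G b (a % b) :=
        ih (a % b).natAbs (hb ▸ natAbs_emod_lt' a b hb0) b (a % b) rfl
      have h2 : FibreBig G (a % b) b := fibreBig_swap hc _ _ h1
      have h3 : FibreBig G (a % b + b * (a / b)) b := by
        apply fibreBig_shear hc _ _ (-(a / b))
        have harith : a % b + b * (a / b) + b * -(a / b) = a % b := by ring
        rw [harith]
        exact h2
      rwa [Int.emod_add_mul_ediv a b] at h3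
end Reduction

section NF
variable {G : Type*} [Group G] (hc : ∀ x y z : G, Commute ⁅x, y⁆ z)

include hc

lemma exists_nf (w : FreeGroup (Fin 2)) :
    ∃ u : Hei, ∀ f : Fin 2 → G, FreeGroup.lift f w = thetaM hc (f 0) (f 1) u := by
  induction w using FreeGroup.induction_on with
  | C1 => exact ⟨1, fun f => by simp⟩
  | of i =>
    fin_cases i
    · exact ⟨⟨1, 0, 0⟩, fun f => by rw [thetaM_x, zpow_one]; exact FreeGroup.lift_apply_of⟩
    · exact ⟨⟨0, 1, 0⟩, fun f => by rw [thetaM_y, zpow_one]; exact FreeGroup.lift_apply_of⟩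
  | inv_of i hi =>
    obtain ⟨u, hu⟩ := hi
    exact ⟨u⁻¹, fun f => by rw [map_inv, hu f, ← map_inv]⟩
  | mul w1 w2 h1 h2 =>
    obtain ⟨u1, hu1⟩ := h1
    obtain ⟨u2, hu2⟩ := h2
    exact ⟨u1 * u2, fun f => by rw [map_mul, hu1 f, hu2 f, ← map_mul]⟩

end NF

/-- `N_{w,G}(g)`: the number of `k`-tuples in `G` on which the word `w` evaluates to `g`. -/
noncomputable def wordFibreCard {k : ℕ} (G : Type*) [Group G] (w : FreeGroup (Fin k)) (g : G) : ℕ :=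
  Nat.card {f : Fin k → G // FreeGroup.lift f w = g}

/-- for a finite `p`-group `G` of nilpotency class at most 2 and a word `w`
in two variables, every `w`-value `g` satisfies `N_{w,G}(g) ≥ |G|`. -/
theorem fibre_ge_card_of_two_variable_word (p : ℕ) (hp : p.Prime)
    (G : Type*) [Group G] [Finite G] (hpG : IsPGroup p G)
    (hclass : commutator G ≤ Subgroup.center G)
    (w : FreeGroup (Fin 2)) (g : G)
    (hg : g ∈ Set.range fun f : Fin 2 → G => FreeGroup.lift f w) :
    Nat.card G ≤ wordFibreCard G w g := by
  have hc : ∀ x y z : G, Commute ⁅x, y⁆ z := by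
    intro x y z
    have hmem : ⁅x, y⁆ ∈ Subgroup.center G :=
      hclass (Subgroup.commutator_mem_commutator (Subgroup.mem_top x) (Subgroup.mem_top y))
    exact ((Subgroup.mem_center_iff.mp hmem) z).symm
  obtain ⟨u, hu⟩ := exists_nf hc w
  obtain ⟨f0, hf0⟩ := hg
  have hiff : ∀ f : Fin 2 → G, FreeGroup.lift f w = g ↔
      ((piFinTwoEquiv fun _ => G) f).1 ^ u.a *
        (((piFinTwoEquiv fun _ => G) f).2 ^ u.b *
          ⁅((piFinTwoEquiv fun _ => G) f).1, ((piFinTwoEquiv fun _ => G) f).2⁆ ^ u.e) = g := by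
    intro f
    rw [hu f]
    rfl
  have hwit : ∃ p : G × G, p.1 ^ u.a * (p.2 ^ u.b * ⁅p.1, p.2⁆ ^ u.e) = g := by
    refine ⟨(f0 0, f0 1), ?_⟩
    rw [← thetaM_apply hc, ← hu f0]
    exact hf0
  have hcardeq : wordFibreCard G w g =
      Nat.card {p : G × G // p.1 ^ u.a * (p.2 ^ u.b * ⁅p.1, p.2⁆ ^ u.e) = g} :=
    Nat.card_congr (Equiv.subtypeEquiv (piFinTwoEquiv fun _ => G) hiff)
  rw [hcardeq]
  exact fibreBig_all hc u.b.natAbs u.a u.b rfl u.e g hwit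
end

section
/- Let p be a prime, let G be a finite p-group of nilpotency class at most 2, let r ≥ 1 and 0 ≤ s_1 ≤ ⋯ ≤ s_r be integers, and let w be the word in 2r variables w = [x_1,x_2]^{p^{s_1}} ⋯ [x_{2r−1},x_{2r}]^{p^{s_r}}. Then for every w-value g ∈ G_w, the fibre size satisfies N_{w,G}(g) ≥ |G|^{2r} / |Z(G)|². -/
/-- The word `[x₁,x₂]^{p^{s₁}} ⋯ [x_{2r-1},x_{2r}]^{p^{s_r}}` (with `[x,y] = x⁻¹y⁻¹xy`)
in `2r` variables. -/
def wCommPow (p r : ℕ) (s : Fin r → ℕ) : FreeGroup (Fin (2 * r)) :=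
  (List.ofFn fun i : Fin r =>
    ((FreeGroup.of (⟨2 * i.val, by have := i.isLt; omega⟩ : Fin (2 * r)))⁻¹ *
     (FreeGroup.of (⟨2 * i.val + 1, by have := i.isLt; omega⟩ : Fin (2 * r)))⁻¹ *
     FreeGroup.of (⟨2 * i.val, by have := i.isLt; omega⟩ : Fin (2 * r)) *
     FreeGroup.of (⟨2 * i.val + 1, by have := i.isLt; omega⟩ : Fin (2 * r))) ^ (p ^ s i)).prod

set_option linter.unusedSectionVars false

open scoped IsMulCommutative commutatorElement

section Aux15
variable {G : Type*} [Group G] {r : ℕ}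

theorem kappa_mem (hclass : commutator G ≤ Subgroup.center G) (x y : G) :
    x⁻¹ * y⁻¹ * x * y ∈ Subgroup.center G := by
  have h : ⁅x⁻¹, y⁻¹⁆ ∈ commutator G :=
    Subgroup.commutator_mem_commutator (Subgroup.mem_top _) (Subgroup.mem_top _)
  have h2 := hclass h
  simpa [commutatorElement_def, mul_assoc] using h2

/-- The commutator `[x,y] = x⁻¹y⁻¹xy` as an element of the centre (class ≤ 2). -/
def kappa (hclass : commutator G ≤ Subgroup.center G) (x y : G) : Subgroup.center G :=
  ⟨x⁻¹ * y⁻¹ * x * y, kappa_mem hclass x y⟩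

theorem kappa_mul_right (h : commutator G ≤ Subgroup.center G) (x y z : G) :
    kappa h x (y * z) = kappa h x y * kappa h x z := by
  apply Subtype.ext
  show x⁻¹ * (y * z)⁻¹ * x * (y * z) = (x⁻¹ * y⁻¹ * x * y) * (x⁻¹ * z⁻¹ * x * z)
  have key : ∀ w : G, w * (x⁻¹ * y⁻¹ * x * y) = (x⁻¹ * y⁻¹ * x * y) * w := fun w =>
    (Subgroup.mem_center_iff.mp (kappa_mem h x y) w)
  calc x⁻¹ * (y * z)⁻¹ * x * (y * z)
      = (x⁻¹ * z⁻¹ * x * z) * (z⁻¹ * ((x⁻¹ * y⁻¹ * x * y) * z)) := by group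
    _ = (x⁻¹ * z⁻¹ * x * z) * (z⁻¹ * (z * (x⁻¹ * y⁻¹ * x * y))) := by rw [← key z]
    _ = (x⁻¹ * z⁻¹ * x * z) * (x⁻¹ * y⁻¹ * x * y) := by group
    _ = (x⁻¹ * y⁻¹ * x * y) * (x⁻¹ * z⁻¹ * x * z) := key _

theorem kappa_mul_left (h : commutator G ≤ Subgroup.center G) (x z y : G) :
    kappa h (x * z) y = kappa h x y * kappa h z y := by
  apply Subtype.ext
  show (x * z)⁻¹ * y⁻¹ * (x * z) * y = (x⁻¹ * y⁻¹ * x * y) * (z⁻¹ * y⁻¹ * z * y)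
  have key : ∀ w : G, w * (x⁻¹ * y⁻¹ * x * y) = (x⁻¹ * y⁻¹ * x * y) * w := fun w =>
    (Subgroup.mem_center_iff.mp (kappa_mem h x y) w)
  calc (x * z)⁻¹ * y⁻¹ * (x * z) * y
      = (z⁻¹ * ((x⁻¹ * y⁻¹ * x * y) * z)) * (z⁻¹ * y⁻¹ * z * y) := by group
    _ = (z⁻¹ * (z * (x⁻¹ * y⁻¹ * x * y))) * (z⁻¹ * y⁻¹ * z * y) := by rw [← key z]
    _ = (x⁻¹ * y⁻¹ * x * y) * (z⁻¹ * y⁻¹ * z * y) := by group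

/-- For fixed `x`, the homomorphism `y ↦ ∏ i, [x i, y i]^(n i)` into the centre. -/
def psiHom (h : commutator G ≤ Subgroup.center G) (n : Fin r → ℕ) (x : Fin r → G) :
    (Fin r → G) →* Subgroup.center G :=
  MonoidHom.mk' (fun y => ∏ i, (kappa h (x i) (y i)) ^ (n i)) (by
    intro y z
    simp only [Pi.mul_apply, kappa_mul_right, mul_pow, Finset.prod_mul_distrib])

/-- For fixed `b`, the homomorphism `x ↦ ∏ i, [x i, b i]^(n i)` into the centre. -/
def phiHom (h : commutator G ≤ Subgroup.center G) (n : Fin r → ℕ) (b : Fin r → G) :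
    (Fin r → G) →* Subgroup.center G :=
  MonoidHom.mk' (fun x => ∏ i, (kappa h (x i) (b i)) ^ (n i)) (by
    intro x z
    simp only [Pi.mul_apply, kappa_mul_left, mul_pow, Finset.prod_mul_distrib])

theorem card_le_ker_mul {A B : Type*} [Group A] [Group B] [Finite A] [Finite B]
    (φ : A →* B) : Nat.card A ≤ Nat.card φ.ker * Nat.card B := by
  have h1 : Nat.card A = Nat.card (A ⧸ φ.ker) * Nat.card φ.ker :=
    Subgroup.card_eq_card_quotient_mul_card_subgroup φ.ker
  have h2 : Nat.card (A ⧸ φ.ker) = Nat.card φ.range :=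
    Nat.card_congr (QuotientGroup.quotientKerEquivRange φ).toEquiv
  have h3 : Nat.card φ.range ≤ Nat.card B :=
    Nat.card_le_card_of_injective _ Subtype.val_injective
  calc Nat.card A = Nat.card (A ⧸ φ.ker) * Nat.card φ.ker := h1
    _ ≤ Nat.card B * Nat.card φ.ker := Nat.mul_le_mul_right _ (h2 ▸ h3)
    _ = Nat.card φ.ker * Nat.card B := Nat.mul_comm _ _

/-- The fibre of a homomorphism over an attained value is in bijection with the kernel. -/
noncomputable def fibreEquivKer {A B : Type*} [Group A] [Group B]
    (φ : A →* B) (t : B) (y₀ : A) (h : φ y₀ = t) : {y : A // φ y = t} ≃ φ.ker where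
  toFun y := ⟨y₀⁻¹ * y.1, by
    rw [MonoidHom.mem_ker, map_mul, map_inv, y.2, h, inv_mul_cancel]⟩
  invFun k := ⟨y₀ * k.1, by
    have hk : φ k.1 = 1 := k.2
    rw [map_mul, hk, mul_one, h]⟩
  left_inv y := by ext; simp
  right_inv k := by ext; simp

theorem nat_card_sigma {ι : Type*} [Finite ι] (f : ι → Type*) [∀ i, Finite (f i)] :
    Nat.card ((i : ι) × f i) = ∑ᶠ i, Nat.card (f i) := by
  haveI := Fintype.ofFinite ι
  haveI := fun i => Fintype.ofFinite (f i)
  rw [Nat.card_eq_fintype_card, Fintype.card_sigma, finsum_eq_sum_of_fintype]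
  simp [Nat.card_eq_fintype_card]

def evenIdx {r : ℕ} (i : Fin r) : Fin (2 * r) := ⟨2 * i.val, by have := i.isLt; omega⟩
def oddIdx {r : ℕ} (i : Fin r) : Fin (2 * r) := ⟨2 * i.val + 1, by have := i.isLt; omega⟩

def interleave (x y : Fin r → G) : Fin (2 * r) → G := fun j =>
  if h : j.val % 2 = 0 then x ⟨j.val / 2, by have := j.isLt; omega⟩
  else y ⟨j.val / 2, by have := j.isLt; omega⟩

theorem interleave_even (x y : Fin r → G) (i : Fin r) :
    interleave x y (evenIdx i) = x i := by
  have h0 : (evenIdx i : Fin (2 * r)).val = 2 * i.val := rfl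
  unfold interleave
  rw [dif_pos (by rw [h0]; omega)]
  congr 1
  apply Fin.ext
  show (evenIdx i : Fin (2 * r)).val / 2 = i.val
  rw [h0]; omega

theorem interleave_odd (x y : Fin r → G) (i : Fin r) :
    interleave x y (oddIdx i) = y i := by
  have h0 : (oddIdx i : Fin (2 * r)).val = 2 * i.val + 1 := rfl
  unfold interleave
  rw [dif_neg (by rw [h0]; omega)]
  congr 1
  apply Fin.ext
  show (oddIdx i : Fin (2 * r)).val / 2 = i.val
  rw [h0]; omega

theorem lift_wCommPow (h : commutator G ≤ Subgroup.center G) (p : ℕ) (s : Fin r → ℕ)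
    (f : Fin (2 * r) → G) :
    FreeGroup.lift f (wCommPow p r s) =
      ((∏ i : Fin r, (kappa h (f (evenIdx i)) (f (oddIdx i))) ^ (p ^ s i) :
          Subgroup.center G) : G) := by
  have hr : ((∏ i : Fin r, (kappa h (f (evenIdx i)) (f (oddIdx i))) ^ (p ^ s i) :
      Subgroup.center G) : G) =
      (List.ofFn fun i : Fin r =>
        ((f (evenIdx i))⁻¹ * (f (oddIdx i))⁻¹ * f (evenIdx i) * f (oddIdx i)) ^ (p ^ s i)).prod := by
    rw [← List.prod_ofFn]
    rw [show ((((List.ofFn fun i : Fin r =>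
      (kappa h (f (evenIdx i)) (f (oddIdx i))) ^ (p ^ s i))).prod : Subgroup.center G) : G) =
      (Subgroup.center G).subtype (List.ofFn fun i : Fin r =>
      (kappa h (f (evenIdx i)) (f (oddIdx i))) ^ (p ^ s i)).prod from rfl]
    rw [map_list_prod, List.map_ofFn]
    congr 1
  rw [hr]
  unfold wCommPow
  rw [map_list_prod, List.map_ofFn]
  congr 1
  congr 1
  funext i
  simp only [Function.comp_apply, map_pow, map_mul, map_inv, FreeGroup.lift_apply_of]
  rfl

theorem psiHom_apply (h : commutator G ≤ Subgroup.center G) (n : Fin r → ℕ)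
    (x y : Fin r → G) : psiHom h n x y = ∏ i, (kappa h (x i) (y i)) ^ (n i) := rfl

theorem phiHom_apply (h : commutator G ≤ Subgroup.center G) (n : Fin r → ℕ)
    (b x : Fin r → G) : phiHom h n b x = ∏ i, (kappa h (x i) (b i)) ^ (n i) := rfl

theorem lift_interleave (h : commutator G ≤ Subgroup.center G) (p : ℕ) (s : Fin r → ℕ)
    (x y : Fin r → G) :
    FreeGroup.lift (interleave x y) (wCommPow p r s) =
      ((psiHom h (fun i => p ^ s i) x y : Subgroup.center G) : G) := by
  rw [lift_wCommPow h p s]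
  congr 1
  rw [psiHom_apply]
  apply Finset.prod_congr rfl
  intro i _
  rw [interleave_even, interleave_odd]

end Aux15

/-- for a finite `p`-group `G` of nilpotency class at most 2 and the word
`w = [x₁,x₂]^{p^{s₁}} ⋯ [x_{2r-1},x_{2r}]^{p^{s_r}}` with `0 ≤ s₁ ≤ ⋯ ≤ s_r`, every
`w`-value `g` satisfies `N_{w,G}(g) ≥ |G|^{2r} / |Z(G)|²`. -/
theorem fibre_ge_of_commutator_power_word (p : ℕ) (hp : p.Prime)
    (G : Type*) [Group G] [Finite G] (hpG : IsPGroup p G)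
    (hclass : commutator G ≤ Subgroup.center G)
    (r : ℕ) (hr : 1 ≤ r) (s : Fin r → ℕ) (hs : Monotone s)
    (g : G)
    (hg : g ∈ Set.range fun f : Fin (2 * r) → G => FreeGroup.lift f (wCommPow p r s)) :
    (Nat.card G : ℚ) ^ (2 * r) / (Nat.card (Subgroup.center G) : ℚ) ^ 2
      ≤ (wordFibreCard G (wCommPow p r s) g : ℚ) := by
  classical
  obtain ⟨f₀, hf₀⟩ := hg
  simp only at hf₀
  set Z := Subgroup.center G with hZdef
  set n : Fin r → ℕ := fun i => p ^ s i with hn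
  set a : Fin r → G := fun i => f₀ (evenIdx i) with ha
  set b : Fin r → G := fun i => f₀ (oddIdx i) with hb
  set Φ : (Fin r → G) →* Z := phiHom hclass n b with hΦ
  set gZ : Z := Φ a with hgZdef
  have hgZ : (gZ : G) = g := by
    rw [← hf₀, lift_wCommPow hclass p s f₀]
    rfl
  -- the index type
  set T := (u : Φ.ker) × {y : Fin r → G // psiHom hclass n (a * (u : Fin r → G)) y = gZ}
    with hT
  -- injection of T into the fibre
  have hinj : ∃ J : T → {f : Fin (2 * r) → G // FreeGroup.lift f (wCommPow p r s) = g},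
      Function.Injective J := by
    refine ⟨fun t => ⟨interleave (a * (t.1 : Fin r → G)) t.2.1, ?_⟩, ?_⟩
    · rw [lift_interleave hclass p s, t.2.2, hgZ]
    · rintro ⟨u, y, hy⟩ ⟨u', y', hy'⟩ hEq
      have h1 : interleave (a * (u : Fin r → G)) y = interleave (a * (u' : Fin r → G)) y' :=
        congrArg Subtype.val hEq
      have hx : a * (u : Fin r → G) = a * (u' : Fin r → G) := funext fun i => by
        have h2 := congrFun h1 (evenIdx i)
        rwa [interleave_even, interleave_even] at h2
      have hyy : y = y' := funext fun i => by
        have h2 := congrFun h1 (oddIdx i)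
        rwa [interleave_odd, interleave_odd] at h2
      obtain rfl : u = u' := Subtype.ext (mul_left_cancel hx)
      subst hyy
      rfl
  obtain ⟨J, hJ⟩ := hinj
  have hcard1 : Nat.card T ≤ wordFibreCard G (wCommPow p r s) g :=
    Nat.card_le_card_of_injective J hJ
  -- cardinality of T
  haveI : Fintype Φ.ker := Fintype.ofFinite _
  have hGr : Nat.card (Fin r → G) = Nat.card G ^ r := by
    rw [Nat.card_fun, Nat.card_eq_fintype_card (α := Fin r), Fintype.card_fin]
  -- each fibre is large
  have hfib : ∀ u : Φ.ker,
      Nat.card G ^ r ≤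
        Nat.card {y : Fin r → G // psiHom hclass n (a * (u : Fin r → G)) y = gZ}
          * Nat.card Z := by
    intro u
    have hw : psiHom hclass n (a * (u : Fin r → G)) b = gZ := by
      have h0 : psiHom hclass n (a * (u : Fin r → G)) b = Φ (a * (u : Fin r → G)) := rfl
      have hu : Φ (u : Fin r → G) = 1 := u.2
      rw [h0, map_mul, hu, mul_one, hgZdef]
    have he : Nat.card {y : Fin r → G // psiHom hclass n (a * (u : Fin r → G)) y = gZ}
        = Nat.card (psiHom hclass n (a * (u : Fin r → G))).ker :=
      Nat.card_congr (fibreEquivKer _ gZ b hw)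
    rw [he, ← hGr]
    exact card_le_ker_mul _
  have hker : Nat.card G ^ r ≤ Nat.card Φ.ker * Nat.card Z := by
    rw [← hGr]; exact card_le_ker_mul Φ
  -- sum up
  have hTcard : Nat.card Φ.ker * Nat.card G ^ r ≤ Nat.card T * Nat.card Z := by
    have hsig : Nat.card T
        = ∑ u : Φ.ker,
            Nat.card {y : Fin r → G // psiHom hclass n (a * (u : Fin r → G)) y = gZ} := by
      haveI : ∀ u : Φ.ker, Fintype {y : Fin r → G //
          psiHom hclass n (a * (u : Fin r → G)) y = gZ} := fun u => Fintype.ofFinite _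
      rw [hT, Nat.card_eq_fintype_card, Fintype.card_sigma]
      exact Finset.sum_congr rfl fun u _ => (Nat.card_eq_fintype_card).symm
    rw [hsig, Finset.sum_mul]
    calc Nat.card Φ.ker * Nat.card G ^ r
        = ∑ _u : Φ.ker, Nat.card G ^ r := by
          rw [Finset.sum_const, Finset.card_univ, smul_eq_mul, Nat.card_eq_fintype_card]
      _ ≤ ∑ u : Φ.ker,
            Nat.card {y : Fin r → G // psiHom hclass n (a * (u : Fin r → G)) y = gZ}
              * Nat.card Z := Finset.sum_le_sum fun u _ => hfib u
  -- final arithmetic over ℕ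
  have main : Nat.card G ^ (2 * r) ≤ wordFibreCard G (wCommPow p r s) g * Nat.card Z ^ 2 := by
    have h1 : Nat.card G ^ (2 * r) = Nat.card G ^ r * Nat.card G ^ r := by
      rw [← pow_add]; ring_nf
    calc Nat.card G ^ (2 * r) = Nat.card G ^ r * Nat.card G ^ r := h1
      _ ≤ (Nat.card Φ.ker * Nat.card Z) * Nat.card G ^ r :=
          Nat.mul_le_mul_right _ hker
      _ = (Nat.card Φ.ker * Nat.card G ^ r) * Nat.card Z := by ring
      _ ≤ (Nat.card T * Nat.card Z) * Nat.card Z := Nat.mul_le_mul_right _ hTcard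
      _ = Nat.card T * Nat.card Z ^ 2 := by ring
      _ ≤ wordFibreCard G (wCommPow p r s) g * Nat.card Z ^ 2 :=
          Nat.mul_le_mul_right _ hcard1
  -- cast to ℚ
  have hZpos : (0 : ℚ) < (Nat.card Z : ℚ) ^ 2 := by
    have : 0 < Nat.card Z := Nat.card_pos
    positivity
  rw [div_le_iff₀ hZpos]
  exact_mod_cast main
end
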